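/- Let μ be a regular TIS state of the F-SSEP with μ(F) = 0. Then μ-almost surely no configuration contains three consecutive empty sites, i.e. μ({η : η(i)=η(i+1)=η(i+2)=0 for some i ∈ ℤ}) = 0. -/

import Mathlib

open MeasureTheory Filter
open scoped ENNReal

attribute [local instance] Classical.propDecidable

noncomputable section
namespace FSSEPPaper

/-- Configuration space of the F-SSEP. -/
abbrev X : Type := ℤ → Bool
/-- Configuration space of the SSM (stack model). -/
abbrev XS : Type := ℤ → ℕ
/-- Parity sequences. -/
abbrev PS : Type := ℤ → Bool

/-- The `(m+1)`-st binary digit of `x`. -/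
def rbit (m : ℕ) (x : ℝ) : Bool := decide (⌊x * 2 ^ (m + 1)⌋ % 2 = 1)

/-- The i.i.d. fair-coin product measure on `ℤ → Bool`, realized through the binary
digits of a uniform random number in `(0,1)`. -/
def coin : Measure (ℤ → Bool) :=
  (volume.restrict (Set.Ioo (0:ℝ) 1)).map (fun x (i : ℤ) => rbit (Encodable.encode i) x)

/-! ### F-SSEP dynamics -/

/-- `wantsR η i`: the particle at `i` attempts to jump to the right. -/
def wantsR (η : X) (i : ℤ) : Bool := η i && η (i - 1) && !η (i + 1)
/-- `wantsL η i`: the particle at `i` attempts to jump to the left. -/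
def wantsL (η : X) (i : ℤ) : Bool := η i && η (i + 1) && !η (i - 1)
/-- The particle at `i` jumps to the right (the coin at the target site resolves conflicts). -/
def jumpsR (η : X) (α : ℤ → Bool) (i : ℤ) : Bool :=
  wantsR η i && (!(wantsL η (i + 2)) || α (i + 1))
/-- The particle at `i` jumps to the left. -/
def jumpsL (η : X) (α : ℤ → Bool) (i : ℤ) : Bool :=
  wantsL η i && (!(wantsR η (i - 2)) || !(α (i - 1)))
/-- One synchronous step of the F-SSEP given the coin field `α`. -/
def fstep (η : X) (α : ℤ → Bool) : X := fun i =>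
  (η i && !(jumpsR η α i) && !(jumpsL η α i)) || jumpsR η α (i - 1) || jumpsL η α (i + 1)

/-- The transition kernel of the F-SSEP. -/
def QF (η : X) : Measure X := coin.map (fstep η)

/-! ### SSM dynamics -/

/-- Net rightward particle flow across the bond `⟨k,k+1⟩` given the coin field `α`. -/
def flow (n : XS) (α : ℤ → Bool) (k : ℤ) : ℤ :=
  if 2 ≤ n k then (if 2 ≤ n (k + 1) then (if α k then 1 else -1) else 1)
  else (if 2 ≤ n (k + 1) then -1 else 0)
/-- One synchronous step of the SSM given the coin field `α`. -/
def sstep (n : XS) (α : ℤ → Bool) : XS := fun i =>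
  ((n i : ℤ) + flow n α (i - 1) - flow n α i).toNat

/-- The transition kernel of the SSM. -/
def QS (n : XS) : Measure XS := coin.map (sstep n)

/-! ### Shifts and classes of measures -/

/-- The shift `τ` on sequences of Booleans: `(τη)(i) = η(i-1)`. -/
def shf (η : ℤ → Bool) : ℤ → Bool := fun i => η (i - 1)
/-- The shift `τ` on stack configurations. -/
def shs (n : XS) : XS := fun i => n (i - 1)

/-- Translation-invariant probability measure on `X`. -/
def TIF (μ : Measure X) : Prop := IsProbabilityMeasure μ ∧ μ.map shf = μ
/-- Translation-invariant stationary state of the F-SSEP. -/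
def TISF (μ : Measure X) : Prop := TIF μ ∧ μ.bind QF = μ
/-- Ergodic translation-invariant measure on `X` (extreme point of the TI measures). -/
def ErgF (μ : Measure X) : Prop := TIF μ ∧ ∀ μ₁ μ₂ : Measure X, TIF μ₁ → TIF μ₂ →
  ∀ p : ℝ≥0∞, 0 < p → p < 1 → μ = p • μ₁ + (1 - p) • μ₂ → μ₁ = μ
/-- Extremal translation-invariant stationary state of the F-SSEP. -/
def ETISF (μ : Measure X) : Prop := TISF μ ∧ ∀ μ₁ μ₂ : Measure X, TISF μ₁ → TISF μ₂ →
  ∀ p : ℝ≥0∞, 0 < p → p < 1 → μ = p • μ₁ + (1 - p) • μ₂ → μ₁ = μ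
/-- A measure on `X` is regular if the all-ones configuration carries no mass. -/
def RegF (μ : Measure X) : Prop := μ {η : X | ∀ i, η i = true} = 0

/-- Translation-invariant probability measure on `X̂`. -/
def TI_S (μ : Measure XS) : Prop := IsProbabilityMeasure μ ∧ μ.map shs = μ
/-- Translation-invariant stationary state of the SSM. -/
def TIS_S (μ : Measure XS) : Prop := TI_S μ ∧ μ.bind QS = μ
/-- Ergodic translation-invariant measure on `X̂`. -/
def Erg_S (μ : Measure XS) : Prop := TI_S μ ∧ ∀ μ₁ μ₂ : Measure XS, TI_S μ₁ → TI_S μ₂ →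
  ∀ p : ℝ≥0∞, 0 < p → p < 1 → μ = p • μ₁ + (1 - p) • μ₂ → μ₁ = μ
/-- Extremal translation-invariant stationary state of the SSM. -/
def ETIS_S (μ : Measure XS) : Prop := TIS_S μ ∧ ∀ μ₁ μ₂ : Measure XS, TIS_S μ₁ → TIS_S μ₂ →
  ∀ p : ℝ≥0∞, 0 < p → p < 1 → μ = p • μ₁ + (1 - p) • μ₂ → μ₁ = μ
/-- A measure on `X̂` is regular if the expected stack height at the origin is finite. -/
def Reg_S (μ : Measure XS) : Prop := ∫⁻ n, (n 0 : ℝ≥0∞) ∂μ ≠ ⊤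

/-! ### Densities -/

/-- `μ` has density `ρ`: a.s. both one-sided Cesàro averages of the configuration equal `ρ`. -/
def densF (μ : Measure X) (ρ : ℝ) : Prop :=
  ∀ᵐ η ∂μ,
    Tendsto (fun N : ℕ => (∑ i ∈ Finset.range N, (if η ((i : ℤ) + 1) then (1:ℝ) else 0)) / (N : ℝ))
      atTop (nhds ρ) ∧
    Tendsto (fun N : ℕ => (∑ i ∈ Finset.range N, (if η (-(i : ℤ) - 1) then (1:ℝ) else 0)) / (N : ℝ))
      atTop (nhds ρ)

/-- `μ` has density `ρ̂`: a.s. both one-sided Cesàro averages of the stack heights equal `ρ̂`. -/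
def densS (μ : Measure XS) (ρ : ℝ) : Prop :=
  ∀ᵐ n ∂μ,
    Tendsto (fun N : ℕ => (∑ i ∈ Finset.range N, (n ((i : ℤ) + 1) : ℝ)) / (N : ℝ)) atTop (nhds ρ) ∧
    Tendsto (fun N : ℕ => (∑ i ∈ Finset.range N, (n (-(i : ℤ) - 1) : ℝ)) / (N : ℝ)) atTop (nhds ρ)

/-! ### Special sets of configurations -/

/-- Frozen F-SSEP configurations: no two adjacent occupied sites. -/
def frozenF : Set X := {η | ∀ i : ℤ, η i = false ∨ η (i + 1) = false}
/-- Frozen SSM configurations: every stack has height `0` or `1`. -/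
def frozenS : Set XS := {n | ∀ i : ℤ, n i ≤ 1}
/-- `X̂*`: no two adjacent short stacks. -/
def XstarS : Set XS := {n | ∀ i : ℤ, ¬(n i ≤ 1 ∧ n (i + 1) ≤ 1)}
/-- The even sector `X̂*_e`: all heights even, no two adjacent zeros. -/
def XeS : Set XS := {n | (∀ i : ℤ, Even (n i)) ∧ ∀ i : ℤ, ¬(n i = 0 ∧ n (i + 1) = 0)}
/-- `H = φ(X̂*)`: the F-SSEP configurations containing none of `000`, `0100`, `0010`, `01010`. -/
def Hset : Set X := {η | ∀ i : ℤ,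
  ¬(η i = false ∧ η (i+1) = false ∧ η (i+2) = false) ∧
  ¬(η i = false ∧ η (i+1) = true ∧ η (i+2) = false ∧ η (i+3) = false) ∧
  ¬(η i = false ∧ η (i+1) = false ∧ η (i+2) = true ∧ η (i+3) = false) ∧
  ¬(η i = false ∧ η (i+1) = true ∧ η (i+2) = false ∧ η (i+3) = true ∧ η (i+4) = false)}

/-- The height profile `h_η`, with `h_η(0) = 0` and increments `(-1)^{η(k)}`. -/
def hgt (η : X) (k : ℤ) : ℤ :=
  (∑ i ∈ Finset.Icc (1:ℤ) k, (if η i then (-1:ℤ) else 1)) -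
    (∑ i ∈ Finset.Icc (k + 1) (0:ℤ), (if η i then (-1:ℤ) else 1))

/-! ### The stationary path measure -/

/-- Finite-dimensional distributions of the stationary F-SSEP Markov chain started from `μ`. -/
def chain (μ : Measure X) : (n : ℕ) → Measure (Fin (n + 1) → X)
  | 0 => μ.map (fun η _ => η)
  | (n + 1) => (chain μ n).bind
      (fun path => (QF (path (Fin.last n))).map (fun η' => Fin.snoc path η'))

/-- `P` is the two-sided stationary path measure of the F-SSEP with one-time marginal `μ`. -/
def IsPathMeasure (μ : Measure X) (P : Measure (ℤ → X)) : Prop :=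
  IsProbabilityMeasure P ∧ ∀ (t : ℤ) (n : ℕ),
    P.map (fun ξ (k : Fin (n + 1)) => ξ (t + ((k : ℕ) : ℤ))) = chain μ n

/-! ### Bernoulli initial states and the time evolution -/

/-- An i.i.d. family of uniform `[0,1]` random variables extracted from a single uniform. -/
def unif01 (x : ℝ) (i : ℤ) : ℝ :=
  ∑' k : ℕ, if rbit (Nat.pair (Encodable.encode i) k) x then ((2:ℝ) ^ (k + 1))⁻¹ else 0

/-- The Bernoulli product measure of density `ρ` on `X`. -/
def bernoulliProd (ρ : ℝ) : Measure X :=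
  (volume.restrict (Set.Ioo (0:ℝ) 1)).map (fun x (i : ℤ) => decide (unif01 x i < ρ))

/-- `iterF μ t = μ Q^t`, the state at time `t` of the F-SSEP started from `μ`. -/
def iterF (μ : Measure X) : ℕ → Measure X
  | 0 => μ
  | (t + 1) => (iterF μ t).bind QF

/-- `S_η`: the sites `i` with `η(i-2) = η(i-1) = η(i) = 0`. -/
def Sset (η : X) : Set ℤ := {i | η (i - 2) = false ∧ η (i - 1) = false ∧ η i = false}

/-- The event that `t 0 < t 1 < ⋯ < t m` are consecutive points of `S_η`. -/
def renewEvent (t : ℕ → ℤ) (m : ℕ) : Set X :=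
  {η | (∀ j ≤ m, t j ∈ Sset η) ∧ ∀ x : ℤ, t 0 ≤ x → x ≤ t m → x ∈ Sset η → ∃ j ≤ m, t j = x}

/-! ### Substitution subshifts -/

/-- The smallest translation-invariant subset of `X` containing all configurations obtained
by the letterwise substitution `b ↦ w b`. -/
def substSet (w : Bool → List Bool) : Set X :=
  {η | ∃ (ζ : ℤ → Bool) (K : ℤ → ℤ),
    (∀ i : ℤ, K (i + 1) = K i + (w (ζ i)).length) ∧
    ∀ (i : ℤ) (j : ℕ) (h : j < (w (ζ i)).length), η (K i + (j : ℤ)) = (w (ζ i)).get ⟨j, h⟩}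

/-- The substitution `1 → 1100`, `0 → 10`. -/
def wLeft : Bool → List Bool := fun b => if b then [true, true, false, false] else [true, false]
/-- The substitution `1 → 0011`, `0 → 01`. -/
def wRight : Bool → List Bool := fun b => if b then [false, false, true, true] else [false, true]

/-- `X_left`. -/
def Xleft : Set X := substSet wLeft
/-- `X_right`. -/
def Xright : Set X := substSet wRight

/-- `X̂_left`: heights at most 2, a 2 is followed by a 0, a 0 is preceded by a 2. -/
def XSleft : Set XS :=
  {n | ∀ i : ℤ, n i ≤ 2 ∧ (n i = 2 → n (i + 1) = 0) ∧ (n i = 0 → n (i - 1) = 2)}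
/-- `X̂_right`: the spatial reflection of `X̂_left`. -/
def XSright : Set XS :=
  {n | ∀ i : ℤ, n i ≤ 2 ∧ (n i = 2 → n (i - 1) = 0) ∧ (n i = 0 → n (i + 1) = 2)}

/-! ### Ring measures and the grand canonical limit -/

/-- Admissible even ring configurations: all heights even, no two cyclically adjacent zeros. -/
def ringOK (L : ℕ) (n : ZMod (2 * L + 1) → ℕ) : Prop :=
  (∀ i, Even (n i)) ∧ ∀ i, ¬(n i = 0 ∧ n (i + 1) = 0)

/-- The grand canonical weight `ζ^{Σ n(i)} 4^{-z(n)}` of an admissible ring configuration. -/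
def ringW (ζ : ℝ) (L : ℕ) (n : ZMod (2 * L + 1) → ℕ) : ℝ≥0∞ :=
  if ringOK L n then
    (ENNReal.ofReal ζ) ^ (∑ i, n i) *
      ((4 : ℝ≥0∞) ^ (Finset.univ.filter (fun i => n i = 0)).card)⁻¹
  else 0

/-- The grand canonical measure `μ^(ζ,L)` on the ring of `2L+1` sites. -/
def muRing (ζ : ℝ) (L : ℕ) : Measure (ZMod (2 * L + 1) → ℕ) :=
  (∑' n, ringW ζ L n)⁻¹ • Measure.sum (fun n => ringW ζ L n • Measure.dirac n)

/-- The cylinder set in the ring determined by `m` on the window `[-K,K]`. -/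
def ringCyl (L K : ℕ) (m : ℤ → ℕ) : Set (ZMod (2 * L + 1) → ℕ) :=
  {n | ∀ i ∈ Finset.Icc (-(K : ℤ)) (K : ℤ), n ((i : ℤ) : ZMod (2 * L + 1)) = m i}

/-- The cylinder set in `X̂` determined by `m` on the window `[-K,K]`. -/
def cylS (K : ℕ) (m : ℤ → ℕ) : Set XS := {n | ∀ i ∈ Finset.Icc (-(K : ℤ)) (K : ℤ), n i = m i}

/-- `μ` is the weak limit `μ^(ζ,∞) = lim_L μ^(ζ,L)` (all cylinder probabilities converge). -/
def IsGCLimit (ζ : ℝ) (μ : Measure XS) : Prop :=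
  IsProbabilityMeasure μ ∧ ∀ (K : ℕ) (m : ℤ → ℕ),
    Tendsto (fun L : ℕ => muRing ζ L (ringCyl L K m)) atTop (nhds (μ (cylS K m)))

/-- `μ̂^(2)`: equal masses on the two configurations with alternating heights `0` and `2`. -/
def muHat2 : Measure XS :=
  (2 : ℝ≥0∞)⁻¹ • Measure.dirac (fun i : ℤ => if Even i then 2 else 0) +
    (2 : ℝ≥0∞)⁻¹ • Measure.dirac (fun i : ℤ => if Even i then 0 else 2)

/-- Mixing under the shift. -/
def MixingS (μ : Measure XS) : Prop :=
  ∀ A B : Set XS, MeasurableSet A → MeasurableSet B →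
    Tendsto (fun k : ℕ => μ (A ∩ shs^[k] ⁻¹' B)) atTop (nhds (μ A * μ B))

/-- Weak mixing under the shift. -/
def WeakMixS (μ : Measure XS) : Prop :=
  ∀ A B : Set XS, MeasurableSet A → MeasurableSet B →
    Tendsto (fun N : ℕ =>
      (∑ k ∈ Finset.range N,
        |(μ (A ∩ shs^[k] ⁻¹' B)).toReal - (μ A).toReal * (μ B).toReal|) / (N : ℝ))
      atTop (nhds 0)

/-- The Gibbs weight of `m` on the window `[a,b]`, for fugacity `ζ` and the one-body
potential `V(n) = 2 ln 2 · δ_{n,0}` (so `e^{-V(0)} = 1/4`). -/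
def gibbsW (ζ : ℝ) (a b : ℤ) (m : XS) : ℝ≥0∞ :=
  (ENNReal.ofReal ζ) ^ (∑ i ∈ Finset.Icc a b, m i) *
    ((4 : ℝ≥0∞) ^ ((Finset.Icc a b).filter (fun i => m i = 0)).card)⁻¹

/-- `μ` is a Gibbs state for fugacity `ζ` and one-body potential `V(n) = 2 ln 2 · δ_{n,0}`,
together with the hard constraints defining `X̂*_e` (DLR ratio condition). -/
def IsGibbsV (ζ : ℝ) (μ : Measure XS) : Prop :=
  μ XeSᶜ = 0 ∧ ∀ a b : ℤ, a ≤ b → ∀ m m' : XS, m ∈ XeS → m' ∈ XeS →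
    (∀ i : ℤ, i < a ∨ b < i → m i = m' i) →
    μ {n : XS | ∀ i ∈ Finset.Icc (a - 1) (b + 1), n i = m i} * gibbsW ζ a b m' =
      μ {n : XS | ∀ i ∈ Finset.Icc (a - 1) (b + 1), n i = m' i} * gibbsW ζ a b m

/-! ### The parity decomposition -/

/-- `γ(m,σ) = m + σ`. -/
def gam (p : XS × PS) : XS := fun i => p.1 i + (if p.2 i then 1 else 0)
/-- The inverse of `γ` (on `X̂*`): split a configuration into even part and parity. -/
def gamInv (n : XS) : XS × PS := (fun i => n i - n i % 2, fun i => decide (n i % 2 = 1))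
/-- Diagonal shift on `X̂ × S`. -/
def shP (p : XS × PS) : XS × PS := (shs p.1, shf p.2)
/-- The SSM dynamics acting on the first factor of `X̂ × S` and trivially on the second. -/
def QP (p : XS × PS) : Measure (XS × PS) := (QS p.1).map (fun m => (m, p.2))

/-- TIS state on `X̂*_e × S`. -/
def TIS_P (ν : Measure (XS × PS)) : Prop :=
  IsProbabilityMeasure ν ∧ ν.map shP = ν ∧ ν.bind QP = ν ∧ ν {p : XS × PS | p.1 ∉ XeS} = 0
/-- ETIS state on `X̂*_e × S`. -/
def ETIS_P (ν : Measure (XS × PS)) : Prop :=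
  TIS_P ν ∧ ∀ ν₁ ν₂ : Measure (XS × PS), TIS_P ν₁ → TIS_P ν₂ →
    ∀ p : ℝ≥0∞, 0 < p → p < 1 → ν = p • ν₁ + (1 - p) • ν₂ → ν₁ = ν

/-! ### The substitution bijection `Φ_φ` -/

/-- The starting position of the word substituted for the `i`-th letter (word `1` starts
at site `1`, and the word for `n(i)` is `0 1^{n(i)}`, of length `n(i) + 1`). -/
def Kst (n : XS) (i : ℤ) : ℤ :=
  1 + (∑ j ∈ Finset.Icc (1:ℤ) (i - 1), ((n j : ℤ) + 1)) -
    (∑ j ∈ Finset.Icc i (0:ℤ), ((n j : ℤ) + 1))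

/-- The substitution map `φ : X̂ → X`, replacing each height `n(i)` by `0 1^{n(i)}`. -/
def phiSub (n : XS) : X := fun x => if ∃ i : ℤ, Kst n i = x then false else true

/-- The normalization `Z_ν = Σ (k+1) ν({n(1) = k})`. -/
def Zsub (ν : Measure XS) : ℝ≥0∞ := ∑' k : ℕ, ((k : ℝ≥0∞) + 1) * ν {n : XS | n 1 = k}

/-- The bijection `Φ_φ` on regular TI measures induced by the substitution `φ`. -/
def Phi (ν : Measure XS) : Measure X :=
  (Zsub ν)⁻¹ • Measure.sum (fun p : (Σ k : ℕ, Fin (k + 1)) =>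
    (ν.restrict {n : XS | n 1 = p.1}).map (fun n (x : ℤ) => phiSub n (x + ((p.2 : ℕ) : ℤ))))

/-! ### Basic states -/

/-- The image `τ(A)` of a set of parity sequences under the shift. -/
def shiftSetP (A : Set PS) : Set PS := {σ | (fun i => σ (i + 1)) ∈ A}

/-- Cyclic successor in `Fin m`. -/
def finCycSucc {m : ℕ} (k : Fin m) : Fin m := ⟨(k.val + 1) % m, Nat.mod_lt _ k.pos⟩

/-- A `(λ,m)`-partition of `S`: pairwise disjoint, covering, cyclically permuted by the
shift (all modulo `λ`-null sets). -/
def IsCycPartition (lam : Measure PS) (m : ℕ) (A : Fin m → Set PS) : Prop :=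
  lam (⋃ k, A k)ᶜ = 0 ∧ (∀ k l, k ≠ l → lam (A k ∩ A l) = 0) ∧
    ∀ k, lam ((shiftSetP (A k) \ A (finCycSucc k)) ∪ (A (finCycSucc k) \ shiftSetP (A k))) = 0

/-- `ν^(q) = q⁻¹ Σ_{i<q} τ^{im}_* ν`. -/
def nuQ (ν : Measure XS) (q m : ℕ) : Measure XS :=
  ((q : ℝ≥0∞))⁻¹ • Measure.sum (fun i : Fin q => ν.map (shs^[(i : ℕ) * m]))

/-- The measure `μ̃^(λ,ν,A)` on `X̂*_e × S`, with `μ_σ = τ^k_* ν^(q)` for `σ ∈ A_k`. -/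
def mutilde (lam : Measure PS) (ν : Measure XS) (q m : ℕ) (A : Fin m → Set PS) :
    Measure (XS × PS) :=
  Measure.sum (fun k : Fin m => (((nuQ ν q m).map (shs^[(k : ℕ)])).prod (lam.restrict (A k))))

/-- `N_{ρ̂_e}`: stationary probability measures of the SSM supported on `X̂*_e` of
density `ρ̂_e` (not necessarily translation invariant). -/
def Nset (ρe : ℝ) : Set (Measure XS) :=
  {ν | IsProbabilityMeasure ν ∧ ν.bind QS = ν ∧ ν XeSᶜ = 0 ∧ densS ν ρe}

/-- `N̄_{ρ̂_e}`: the extreme points of `N_{ρ̂_e}`. -/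
def NExt (ρe : ℝ) : Set (Measure XS) :=
  {ν | ν ∈ Nset ρe ∧ ∀ ν₁ ν₂ : Measure XS, ν₁ ∈ Nset ρe → ν₂ ∈ Nset ρe →
    ∀ p : ℝ≥0∞, 0 < p → p < 1 → ν = p • ν₁ + (1 - p) • ν₂ → ν₁ = ν}

/-- `A'` is a proper refinement of `A` (modulo `λ`-null sets). -/
def ProperRefines (lam : Measure PS) {m m' : ℕ} (A' : Fin m' → Set PS) (A : Fin m → Set PS) :
    Prop :=
  m < m' ∧ ∀ j : Fin m', ∃ k : Fin m, lam (A' j \ A k) = 0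

/-- `μ` is an irreducible basic state of the SSM on `X̂*`. -/
def IsIrreducibleBasic (μ : Measure XS) : Prop :=
  ∃ (lam : Measure PS) (ρe : ℝ) (ν : Measure XS) (n m q : ℕ) (A : Fin m → Set PS),
    ErgF lam ∧ 1 ≤ ρe ∧ ν ∈ NExt ρe ∧
    0 < n ∧ ν.map (shs^[n]) = ν ∧ (∀ j : ℕ, 0 < j → j < n → ν.map (shs^[j]) ≠ ν) ∧
    n = q * m ∧ IsCycPartition lam m A ∧
    (¬ ∃ (m' : ℕ) (A' : Fin m' → Set PS),
      m' ∣ n ∧ IsCycPartition lam m' A' ∧ ProperRefines lam A' A) ∧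
    μ = (mutilde lam ν q m A).map gam

/-! ### Auxiliary development for Statement 2 -/

section Statement2Aux

open MeasureTheory

/-- Measurability from the `true`-fiber, for `Bool`-valued maps. -/
lemma meas_of_bool {β : Type*} [MeasurableSpace β] {f : β → Bool}
    (h : MeasurableSet {x | f x = true}) : Measurable f := by
  intro s _
  have hT : f ⁻¹' {true} = {x | f x = true} := by
    ext x; simp
  have hF : f ⁻¹' {false} = {x | f x = true}ᶜ := by
    ext x; cases hx : f x <;> simp [hx]
  have hU : f ⁻¹' s = ⋃ b ∈ s, f ⁻¹' {b} := by ext x; simp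
  rw [hU]
  apply MeasurableSet.biUnion (Set.to_countable s)
  intro b _
  cases b
  · rw [hF]; exact h.compl
  · rw [hT]; exact h

lemma measSet_bool {β : Type*} [MeasurableSpace β] {f : β → Bool}
    (h : Measurable f) : MeasurableSet {x | f x = true} := by
  have : {x | f x = true} = f ⁻¹' {true} := by ext x; simp
  rw [this]; exact h (measurableSet_singleton true)

lemma Meas.band {β : Type*} [MeasurableSpace β] {f g : β → Bool}
    (hf : Measurable f) (hg : Measurable g) : Measurable fun x => f x && g x := by
  apply meas_of_bool
  have : {x | (f x && g x) = true} = {x | f x = true} ∩ {x | g x = true} := by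
    ext x; simp
  rw [this]; exact (measSet_bool hf).inter (measSet_bool hg)

lemma Meas.bor {β : Type*} [MeasurableSpace β] {f g : β → Bool}
    (hf : Measurable f) (hg : Measurable g) : Measurable fun x => f x || g x := by
  apply meas_of_bool
  have : {x | (f x || g x) = true} = {x | f x = true} ∪ {x | g x = true} := by
    ext x; simp
  rw [this]; exact (measSet_bool hf).union (measSet_bool hg)

lemma Meas.bnot {β : Type*} [MeasurableSpace β] {f : β → Bool}
    (hf : Measurable f) : Measurable fun x => !(f x) := by
  apply meas_of_bool
  have : {x | (!(f x)) = true} = {x | f x = true}ᶜ := by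
    ext x; cases hx : f x <;> simp [hx]
  rw [this]; exact (measSet_bool hf).compl


/-- coordinate evaluations are measurable -/
lemma meas_coord1 (i : ℤ) : Measurable fun p : X × X => p.1 i :=
  (measurable_pi_apply i).comp measurable_fst

lemma meas_coord2 (i : ℤ) : Measurable fun p : X × X => p.2 i :=
  (measurable_pi_apply i).comp measurable_snd

lemma meas_wantsR (i : ℤ) : Measurable fun p : X × X => wantsR p.1 i := by
  simp only [wantsR]
  exact Meas.band (Meas.band (meas_coord1 i) (meas_coord1 (i-1))) (Meas.bnot (meas_coord1 (i+1)))

lemma meas_wantsL (i : ℤ) : Measurable fun p : X × X => wantsL p.1 i := by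
  simp only [wantsL]
  exact Meas.band (Meas.band (meas_coord1 i) (meas_coord1 (i+1))) (Meas.bnot (meas_coord1 (i-1)))

lemma meas_jumpsR (i : ℤ) : Measurable fun p : X × X => jumpsR p.1 p.2 i := by
  simp only [jumpsR]
  exact Meas.band (meas_wantsR i) (Meas.bor (Meas.bnot (meas_wantsL (i+2))) (meas_coord2 (i+1)))

lemma meas_jumpsL (i : ℤ) : Measurable fun p : X × X => jumpsL p.1 p.2 i := by
  simp only [jumpsL]
  exact Meas.band (meas_wantsL i) (Meas.bor (Meas.bnot (meas_wantsR (i-2))) (Meas.bnot (meas_coord2 (i-1))))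

lemma meas_fstep : Measurable fun p : X × X => fstep p.1 p.2 := by
  apply measurable_pi_lambda
  intro i
  simp only [fstep]
  exact Meas.bor (Meas.bor (Meas.band (Meas.band (meas_coord1 i) (Meas.bnot (meas_jumpsR i)))
    (Meas.bnot (meas_jumpsL i))) (meas_jumpsR (i-1))) (meas_jumpsL (i+1))

lemma meas_fstep_right (η : X) : Measurable (fstep η) := by
  have : fstep η = (fun p : X × X => fstep p.1 p.2) ∘ (fun α => (η, α)) := rfl
  rw [this]
  exact meas_fstep.comp (measurable_const.prodMk measurable_id)

lemma meas_coinfun : Measurable fun x : ℝ => (fun i : ℤ => rbit (Encodable.encode i) x) := by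
  apply measurable_pi_lambda
  intro i
  apply meas_of_bool
  have : {x : ℝ | rbit (Encodable.encode i) x = true}
      = (fun x : ℝ => ⌊x * 2 ^ (Encodable.encode i + 1)⌋) ⁻¹' {z : ℤ | z % 2 = 1} := by
    ext x; simp [rbit]
  rw [this]
  exact (Measurable.floor (measurable_id.mul_const _)) (Set.to_countable _).measurableSet

instance coin_prob : IsProbabilityMeasure coin := by
  have h1 : IsProbabilityMeasure (volume.restrict (Set.Ioo (0:ℝ) 1)) := by
    constructor
    simp [Real.volume_Ioo]
  exact Measure.isProbabilityMeasure_map meas_coinfun.aemeasurable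

lemma QF_apply (η : X) {s : Set X} (hs : MeasurableSet s) :
    QF η s = coin ((fstep η) ⁻¹' s) := by
  rw [QF, Measure.map_apply (meas_fstep_right η) hs]

lemma meas_QF_apply {s : Set X} (hs : MeasurableSet s) :
    Measurable fun η => QF η s := by
  have h : ∀ η, QF η s = coin (Prod.mk η ⁻¹' {p : X × X | fstep p.1 p.2 ∈ s}) := by
    intro η; rw [QF_apply η hs]; rfl
  simp only [h]
  exact measurable_measure_prodMk_left (meas_fstep hs)

lemma meas_QF : Measurable QF :=
  Measure.measurable_of_measurable_coe QF (fun _ hs => meas_QF_apply hs)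


variable {mu : Measure X}

lemma stat_apply (hstat : mu.bind QF = mu) {W : Set X} (hW : MeasurableSet W) :
    mu W = ∫⁻ η, QF η W ∂mu := by
  conv_lhs => rw [← hstat]
  exact Measure.bind_apply hW meas_QF.aemeasurable

/-- Key a.e. absorption lemma: if a.e. configurations in `W` step into `W`,
then a.e. the membership in `W` is preserved exactly. -/
lemma absorb (hprob : IsProbabilityMeasure mu) (hstat : mu.bind QF = mu)
    {W : Set X} (hW : MeasurableSet W)
    (hf : ∀ᵐ η ∂mu, ∀ᵐ α ∂coin, η ∈ W → fstep η α ∈ W) :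
    ∀ᵐ η ∂mu, ∀ᵐ α ∂coin, (η ∈ W ↔ fstep η α ∈ W) := by
  have hmeasg : Measurable fun η => QF η W := meas_QF_apply hW
  -- on W, QF η W = 1 a.e.
  have h1 : ∀ᵐ η ∂mu, η ∈ W → QF η W = 1 := by
    filter_upwards [hf] with η hη hmem
    have : ∀ᵐ α ∂coin, fstep η α ∈ W := by
      filter_upwards [hη] with α hα; exact hα hmem
    have hc : coin ((fstep η ⁻¹' W)ᶜ) = 0 := by
      rw [← Set.preimage_compl]
      exact this
    rw [QF_apply η hW]
    exact (prob_compl_eq_zero_iff ((meas_fstep_right η) hW)).mp hc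
  -- split the stationarity identity over W and Wᶜ
  have hsplit : ∫⁻ η, QF η W ∂mu
      = ∫⁻ η in W, QF η W ∂mu + ∫⁻ η in Wᶜ, QF η W ∂mu :=
    (lintegral_add_compl _ hW).symm
  have hOnW : ∫⁻ η in W, QF η W ∂mu = mu W := by
    have : ∫⁻ η in W, QF η W ∂mu = ∫⁻ _ in W, 1 ∂mu := by
      apply lintegral_congr_ae
      rw [EventuallyEq, ae_restrict_iff' hW]
      filter_upwards [h1] with η h hm using h hm
    rw [this, setLIntegral_one]
  have hzero : ∫⁻ η in Wᶜ, QF η W ∂mu = 0 := by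
    have hfin : mu W ≠ ⊤ := measure_ne_top mu W
    have heq := stat_apply hstat hW
    rw [hsplit, hOnW] at heq
    -- mu W = mu W + rest
    by_contra hne
    have hlt : mu W < mu W + ∫⁻ η in Wᶜ, QF η W ∂mu :=
      ENNReal.lt_add_right hfin hne
    exact hlt.ne heq
  have h0 : ∀ᵐ η ∂mu, η ∈ Wᶜ → QF η W = 0 := by
    have := (lintegral_eq_zero_iff hmeasg).mp hzero
    rw [EventuallyEq, ae_restrict_iff' hW.compl] at this
    filter_upwards [this] with η h hm using h hm
  filter_upwards [h1, h0] with η hin hout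
  by_cases hm : η ∈ W
  · have h1' : coin ((fstep η ⁻¹' W)ᶜ) = 0 := by
      apply (prob_compl_eq_zero_iff ((meas_fstep_right η) hW)).mpr
      rw [← QF_apply η hW]; exact hin hm
    have : ∀ᵐ α ∂coin, fstep η α ∈ W := by
      rw [ae_iff]
      exact h1'
    filter_upwards [this] with α ha
    exact ⟨fun _ => ha, fun _ => hm⟩
  · have : coin (fstep η ⁻¹' W) = 0 := by
      rw [← QF_apply η hW]; exact hout hm
    have : ∀ᵐ α ∂coin, fstep η α ∉ W := by
      rw [ae_iff]
      convert this using 2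
      ext α; simp [Set.preimage]
    filter_upwards [this] with α ha
    exact ⟨fun h => absurd h hm, fun h => absurd h ha⟩


/-- Null sets are a.e. avoided after one step. -/
lemma null_pres (hprob : IsProbabilityMeasure mu) (hstat : mu.bind QF = mu)
    {N : Set X} (hN : MeasurableSet N) (hnull : mu N = 0) :
    ∀ᵐ η ∂mu, ∀ᵐ α ∂coin, fstep η α ∉ N := by
  have hae : ∀ᵐ η ∂mu, η ∉ N := measure_eq_zero_iff_ae_notMem.mp hnull
  have habs := absorb hprob hstat hN (by
    filter_upwards [hae] with η hη
    exact Filter.Eventually.of_forall (fun α hmem => absurd hmem hη))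
  filter_upwards [habs, hae] with η h1 h2
  filter_upwards [h1] with α ha
  exact fun hmem => h2 (ha.mpr hmem)

/-- the two-sided shift by `s`. -/
def shiftBy (s : ℤ) : X → X := fun η i => η (i + s)

lemma meas_shiftBy (s : ℤ) : Measurable (shiftBy s) :=
  measurable_pi_lambda _ fun i => measurable_pi_apply (i + s)

lemma shiftBy_comp (s t : ℤ) : shiftBy s ∘ shiftBy t = shiftBy (s + t) := by
  funext η i; simp [shiftBy, add_assoc]

lemma shiftBy_zero : shiftBy 0 = id := by
  funext η i; simp [shiftBy]

lemma shiftBy_invariant (hTI : mu.map shf = mu) (s : ℤ) : mu.map (shiftBy s) = mu := by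
  have hm1 : shf = shiftBy (-1) := by
    funext η i; simp [shf, shiftBy, sub_eq_add_neg]
  have hneg : mu.map (shiftBy (-1)) = mu := by rw [← hm1]; exact hTI
  -- first invariance under shiftBy 1 (inverse of shf)
  have hpos : mu.map (shiftBy 1) = mu := by
    have h := congrArg (Measure.map (shiftBy 1)) hneg
    rw [Measure.map_map (meas_shiftBy 1) (meas_shiftBy (-1)), shiftBy_comp] at h
    norm_num at h
    rw [shiftBy_zero, Measure.map_id] at h
    exact h.symm
  induction s using Int.induction_on with
  | zero => rw [shiftBy_zero, Measure.map_id]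
  | succ n ih =>
      have : shiftBy ((n : ℤ) + 1) = shiftBy 1 ∘ shiftBy (n : ℤ) := by
        rw [shiftBy_comp]; ring_nf
      rw [this, ← Measure.map_map (meas_shiftBy 1) (meas_shiftBy (n:ℤ)), ih, hpos]
  | pred n ih =>
      have : shiftBy (-(n : ℤ) - 1) = shiftBy (-1) ∘ shiftBy (-(n : ℤ)) := by
        rw [shiftBy_comp]; ring_nf
      rw [this, ← Measure.map_map (meas_shiftBy (-1)) (meas_shiftBy (-(n:ℤ))), ih, hneg]


lemma shift_null (hTI : mu.map shf = mu) (s : ℤ) {N : Set X} (hN : MeasurableSet N)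
    (hnull : mu N = 0) : mu (shiftBy s ⁻¹' N) = 0 := by
  have := shiftBy_invariant hTI s
  rw [← Measure.map_apply (meas_shiftBy s) hN, this]
  exact hnull

lemma shift_measure (hTI : mu.map shf = mu) (s : ℤ) {N : Set X} (hN : MeasurableSet N) :
    mu (shiftBy s ⁻¹' N) = mu N := by
  have := shiftBy_invariant hTI s
  rw [← Measure.map_apply (meas_shiftBy s) hN, this]

/-- A measurable set whose shifts are pairwise disjoint is null. -/
lemma null_of_disjoint_shifts (hprob : IsProbabilityMeasure mu) (hTI : mu.map shf = mu)
    {E : Set X} (hE : MeasurableSet E)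
    (hdisj : ∀ s t : ℤ, s ≠ t → shiftBy s ⁻¹' E ∩ shiftBy t ⁻¹' E = ∅) :
    mu E = 0 := by
  by_contra hne
  have hpos : 0 < mu E := pos_iff_ne_zero.mpr hne
  -- choose n with n • mu E > 1
  obtain ⟨n, hn⟩ := ENNReal.exists_nat_gt (ENNReal.div_lt_top ENNReal.one_ne_top hne).ne
  have hle : ∀ m : ℕ, (m : ℝ≥0∞) * mu E ≤ 1 := by
    intro m
    have hdis : ((Finset.range m : Finset ℕ) : Set ℕ).PairwiseDisjoint
        (fun k : ℕ => shiftBy (k : ℤ) ⁻¹' E) := by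
      intro a _ b _ hab
      simp only [Function.onFun, Set.disjoint_iff_inter_eq_empty]
      exact hdisj a b (by exact_mod_cast hab)
    have := measure_biUnion_finset hdis
      (fun k _ => (meas_shiftBy (k : ℤ)) hE) (μ := mu)
    have hsum : ∑ k ∈ Finset.range m, mu (shiftBy (k : ℤ) ⁻¹' E) = (m : ℝ≥0∞) * mu E := by
      have : ∀ k ∈ Finset.range m, mu (shiftBy (k : ℤ) ⁻¹' E) = mu E := by
        intro k _; exact shift_measure hTI _ hE
      rw [Finset.sum_congr rfl this]
      simp [Finset.sum_const, nsmul_eq_mul]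
    calc (m : ℝ≥0∞) * mu E = mu (⋃ k ∈ Finset.range m, shiftBy (k : ℤ) ⁻¹' E) := by
          rw [this, hsum]
      _ ≤ 1 := prob_le_one
  -- contradiction: for large n, n * mu E > 1
  have h1 : (1 : ℝ≥0∞) / mu E < n := hn
  have : (1:ℝ≥0∞) < (n : ℝ≥0∞) * mu E := by
    rw [ENNReal.div_lt_iff (Or.inl hne) (Or.inl (measure_ne_top mu E))] at h1
    exact h1
  exact absurd (hle n) (not_le.mpr this)


/-! ### Counting particles -/

/-- number of occupied sites in `[a,b]`. -/
def cnt (η : X) (a b : ℤ) : ℕ := ∑ i ∈ Finset.Icc a b, (if η i = true then 1 else 0)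

lemma cnt_empty {η : X} {a b : ℤ} (h : b < a) : cnt η a b = 0 := by
  rw [cnt, Finset.Icc_eq_empty (by omega)]; rfl

lemma cnt_step {η : X} {a b : ℤ} (h : a ≤ b) :
    cnt η a b = cnt η a (b - 1) + (if η b = true then 1 else 0) := by
  have hins : Finset.Icc a b = insert b (Finset.Icc a (b-1)) := by
    ext x; simp only [Finset.mem_Icc, Finset.mem_insert]; omega
  rw [cnt, hins, Finset.sum_insert (by simp only [Finset.mem_Icc]; omega), cnt]
  ring

lemma cnt_mono {η : X} {a b b' : ℤ} (h : b ≤ b') : cnt η a b ≤ cnt η a b' := by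
  apply Finset.sum_le_sum_of_subset
  intro x hx
  simp only [Finset.mem_Icc] at *
  omega

lemma cnt_split {η : X} {a c b : ℤ} (h1 : a - 1 ≤ c) (h2 : c ≤ b) :
    cnt η a b = cnt η a c + cnt η (c+1) b := by
  rw [cnt, cnt, cnt, ← Finset.sum_union (by
    simp only [Finset.disjoint_left, Finset.mem_Icc]; omega)]
  congr 1
  ext x; simp only [Finset.mem_Icc, Finset.mem_union]; omega

lemma cnt_zero_of_empty {η : X} {a b : ℤ} (h : ∀ i, a ≤ i → i ≤ b → η i = false) :
    cnt η a b = 0 := by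
  rw [cnt]
  apply Finset.sum_eq_zero
  intro x hx
  simp only [Finset.mem_Icc] at hx
  simp [h x hx.1 hx.2]

lemma cnt_one_le {η : X} {x b : ℤ} (h1 : 1 ≤ x) (h2 : x ≤ b) (ho : η x = true) :
    1 ≤ cnt η 1 b := by
  have : cnt η 1 x ≥ 1 := by
    rw [cnt_step (by omega), ho]
    norm_num
  calc 1 ≤ cnt η 1 x := this
    _ ≤ cnt η 1 b := cnt_mono h2

lemma cnt_lt_of_lt {η : X} {x y : ℤ} (hxy : x < y) (hy : η y = true) (hx : 1 ≤ y) :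
    cnt η 1 x < cnt η 1 y := by
  rw [cnt_step (by omega : (1:ℤ) ≤ y), hy]
  have := cnt_mono (η := η) (a := 1) (show x ≤ y - 1 by omega)
  norm_num
  omega

/-- `i` is the position of the `k`-th particle to the right of the origin. -/
def IsKth (η : X) (k : ℕ) (i : ℤ) : Prop := 1 ≤ i ∧ η i = true ∧ cnt η 1 i = k

lemma IsKth_unique {η : X} {k : ℕ} {i i' : ℤ} (h : IsKth η k i) (h' : IsKth η k i') :
    i = i' := by
  rcases h with ⟨hi1, hi2, hi3⟩
  rcases h' with ⟨hj1, hj2, hj3⟩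
  by_contra hne
  rcases lt_or_gt_of_ne hne with hlt | hlt
  · have := cnt_lt_of_lt hlt hj2 hj1; omega
  · have := cnt_lt_of_lt hlt hi2 hi1; omega

lemma IsKth_mono {η : X} {k k' : ℕ} {i i' : ℤ} (h : IsKth η k i) (h' : IsKth η k' i')
    (hkk : k < k') : i < i' := by
  by_contra hle
  push_neg at hle
  have := cnt_mono (η := η) (a := 1) hle
  rw [h.2.2, h'.2.2] at this
  omega

lemma IsKth_pos {η : X} {k : ℕ} {i : ℤ} (h : IsKth η k i) : 1 ≤ k := by
  have h1 := cnt_one_le h.1 (le_refl i) h.2.1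
  rw [h.2.2] at h1
  exact h1

/-- the position of the `k`-th particle (junk value 0 if undefined). -/
def Pk (η : X) (k : ℕ) : ℤ := if h : ∃ i, IsKth η k i then h.choose else 0

lemma Pk_spec {η : X} {k : ℕ} (h : ∃ i, IsKth η k i) : IsKth η k (Pk η k) := by
  rw [Pk, dif_pos h]; exact h.choose_spec

lemma Pk_eq {η : X} {k : ℕ} {i : ℤ} (h : IsKth η k i) : Pk η k = i :=
  IsKth_unique (Pk_spec ⟨i, h⟩) h

/-- crossing lemma: if at least `k` particles in `[1,b]`, the `k`-th particle exists
and lies in `[1,b]`. -/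
lemma cross {η : X} {k : ℕ} {b : ℤ} (hk : 1 ≤ k) (h : k ≤ cnt η 1 b) :
    ∃ i, 1 ≤ i ∧ i ≤ b ∧ IsKth η k i := by
  have hbdd : ∃ lb : ℤ, ∀ z, (1 ≤ z ∧ k ≤ cnt η 1 z) → lb ≤ z := ⟨1, fun z hz => hz.1⟩
  have hinh : ∃ z : ℤ, (1 ≤ z ∧ k ≤ cnt η 1 z) := by
    refine ⟨b, ?_, h⟩
    by_contra hb
    push_neg at hb
    rw [cnt_empty (by omega)] at h
    omega
  obtain ⟨i, ⟨hi1, hi2⟩, hmin⟩ := Int.exists_least_of_bdd hbdd hinh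
  have hprev : cnt η 1 (i - 1) < k := by
    by_cases hc : 1 ≤ i - 1
    · by_contra hge
      push_neg at hge
      have := hmin (i-1) ⟨hc, hge⟩
      omega
    · rw [cnt_empty (by omega)]; omega
  have hocc : η i = true := by
    by_contra hocc
    have : cnt η 1 i = cnt η 1 (i-1) := by
      rw [cnt_step hi1]
      simp [hocc]
    omega
  have hcnt : cnt η 1 i = k := by
    rw [cnt_step hi1, hocc] at hi2 ⊢
    norm_num at hi2 ⊢
    omega
  refine ⟨i, hi1, ?_, hi1, hocc, hcnt⟩
  by_contra hib
  push_neg at hib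
  have := cnt_mono (η := η) (a := 1) (show b ≤ i - 1 by omega)
  omega

/-- existence of the `k`-th particle from unboundedness on the right. -/
lemma exists_kth {η : X} (hub : ∀ m : ℤ, ∃ j, m < j ∧ η j = true) :
    ∀ k : ℕ, 1 ≤ k → ∃ i, IsKth η k i := by
  intro k hk
  -- find a window with at least k particles
  suffices h : ∀ k : ℕ, ∃ b : ℤ, 1 ≤ b ∧ k ≤ cnt η 1 b by
    obtain ⟨b, _, hb⟩ := h k
    obtain ⟨i, _, _, hkth⟩ := cross hk hb
    exact ⟨i, hkth⟩
  intro m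
  induction m with
  | zero => exact ⟨1, le_refl _, by omega⟩
  | succ n ih =>
      obtain ⟨b, hb1, hb2⟩ := ih
      obtain ⟨j, hj1, hj2⟩ := hub b
      refine ⟨j, by omega, ?_⟩
      have : cnt η 1 b < cnt η 1 j := cnt_lt_of_lt hj1 hj2 (by omega)
      omega

/-- chain lemma: `m` increasing occupied positions in `[1,b]` force `cnt ≥ m`. -/
lemma cnt_ge_chain {ξ : X} {f : ℕ → ℤ} {m : ℕ} {b : ℤ}
    (h1 : ∀ j, 1 ≤ j → j ≤ m → 1 ≤ f j ∧ ξ (f j) = true)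
    (h2 : ∀ j, 1 ≤ j → j < m → f j < f (j+1))
    (h3 : f m ≤ b) : m ≤ cnt ξ 1 b := by
  induction m generalizing b with
  | zero => omega
  | succ n ih =>
      obtain ⟨hf1, hf2⟩ := h1 (n+1) (by omega) (le_refl _)
      have hstep : cnt ξ 1 (f (n+1)) = cnt ξ 1 (f (n+1) - 1) + 1 := by
        rw [cnt_step hf1, hf2]
        norm_num
      have hrest : n ≤ cnt ξ 1 (f (n+1) - 1) := by
        rcases Nat.eq_zero_or_pos n with hn | hn
        · omega
        · exact ih (fun j hj hj' => h1 j hj (by omega))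
            (fun j hj hj' => h2 j hj (by omega))
            (by have := h2 n hn (by omega); omega)
      have := cnt_mono (η := ξ) (a := 1) h3
      omega


/-! ### Pointwise dynamical lemmas -/

section Pointwise
variable {η : X} {α : ℤ → Bool}

/-- an isolated particle stays put. -/
lemma stay_lemma (i : ℤ) (h0 : η i = true) (hm : η (i-1) = false) (hp : η (i+1) = false) :
    fstep η α i = true := by
  simp only [fstep, jumpsR, jumpsL, wantsR, wantsL, h0, hm, hp]
  simp

/-- deterministic left jump of the left particle of a pair with no competitor. -/
lemma jump_left (i : ℤ) (h0 : η i = true) (h1 : η (i+1) = true) (hm : η (i-1) = false)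
    (hc : ¬(η (i-2) = true ∧ η (i-3) = true)) :
    fstep η α (i-1) = true := by
  have e1 : i - 1 + 1 = i := by ring
  have e2 : i - 2 - 1 = i - 3 := by ring
  have e3 : i - 2 + 1 = i - 1 := by ring
  simp only [fstep, jumpsR, jumpsL, wantsR, wantsL, e1, e2, e3]
  cases h2 : η (i-2) with
  | true =>
      cases h3 : η (i-3) with
      | true => exact absurd ⟨h2, h3⟩ hc
      | false => simp [h0, h1, hm, h2, h3]
  | false => simp [h0, h1, hm, h2]

/-- no triple of empty sites is created. -/
lemma Spres_pointwise (i : ℤ)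
    (h2 : fstep η α (i-2) = false) (h1 : fstep η α (i-1) = false)
    (h0 : fstep η α i = false) :
    η (i-2) = false ∧ η (i-1) = false ∧ η i = false := by
  have e1 : i - 1 + 1 = i := by ring
  have e2 : i - 1 - 1 = i - 2 := by ring
  have e3 : i - 2 + 1 = i - 1 := by ring
  simp only [fstep] at h0 h1 h2
  rw [Bool.or_eq_false_iff, Bool.or_eq_false_iff] at h0 h1 h2
  obtain ⟨⟨h0a, h0b⟩, h0c⟩ := h0
  obtain ⟨⟨h1a, h1b⟩, h1c⟩ := h1
  obtain ⟨⟨h2a, h2b⟩, h2c⟩ := h2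
  rw [e1] at h1c
  rw [e2] at h1b
  rw [e3] at h2c
  -- middle site
  have hmid : η (i-1) = false := by
    cases hx : η (i-1) with
    | false => rfl
    | true =>
        rw [hx] at h1a
        -- particle must have jumped
        cases hjR : jumpsR η α (i-1) with
        | true => rw [hjR] at h0b; exact absurd h0b (by simp)
        | false =>
            cases hjL : jumpsL η α (i-1) with
            | true => rw [hjL] at h2c; exact absurd h2c (by simp)
            | false => rw [hjR, hjL] at h1a; exact absurd h1a (by simp)
  refine ⟨?_, hmid, ?_⟩
  · cases hx : η (i-2) with
    | false => rfl
    | true =>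
        rw [hx] at h2a
        cases hjR : jumpsR η α (i-2) with
        | true => rw [hjR] at h1b; exact absurd h1b (by simp)
        | false =>
            cases hjL : jumpsL η α (i-2) with
            | true =>
                have : wantsL η (i-2) = true := by
                  have := hjL
                  simp only [jumpsL, Bool.and_eq_true] at this
                  exact this.1
                simp only [wantsL, e3, Bool.and_eq_true] at this
                rw [hmid] at this
                exact absurd this.1.2 (by simp)
            | false => rw [hjR, hjL] at h2a; exact absurd h2a (by simp)
  · cases hx : η i with
    | false => rfl
    | true =>
        rw [hx] at h0a
        cases hjL : jumpsL η α i with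
        | true => rw [hjL] at h1c; exact absurd h1c (by simp)
        | false =>
            cases hjR : jumpsR η α i with
            | true =>
                have : wantsR η i = true := by
                  have := hjR
                  simp only [jumpsR, Bool.and_eq_true] at this
                  exact this.1
                simp only [wantsR, Bool.and_eq_true] at this
                rw [hmid] at this
                exact absurd this.1.2 (by simp)
            | false => rw [hjR, hjL] at h0a; exact absurd h0a (by simp)

end Pointwise


/-! ### Structure of configurations with an `S`-point at the origin -/

section Struct
variable {η : X} {α : ℤ → Bool} {k : ℕ}

/-- sites `-2,-1,0` are empty. -/
def origS (η : X) : Prop := η (-2) = false ∧ η (-1) = false ∧ η 0 = false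

lemma negsite (hS : origS η) {x : ℤ} (h1 : -2 ≤ x) (h2 : x ≤ 0) : η x = false := by
  interval_cases x
  · exact hS.1
  · exact hS.2.1
  · exact hS.2.2

lemma before_false (hS : origS η) (hEx : ∀ j : ℕ, 1 ≤ j → ∃ i, IsKth η j i)
    (hIso : ∀ j : ℕ, 1 ≤ j → j ≤ k → η (Pk η j + 1) = false) :
    ∀ j : ℕ, 1 ≤ j → j ≤ k + 1 → η (Pk η j - 1) = false := by
  intro j hj1 hj2
  have hq := Pk_spec (hEx j hj1)
  by_cases hq1 : Pk η j = 1
  · rw [show Pk η j - 1 = 0 by omega]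
    exact hS.2.2
  · have hge : 1 ≤ Pk η j - 1 := by have := hq.1; omega
    cases hx : η (Pk η j - 1) with
    | false => rfl
    | true =>
        set m := cnt η 1 (Pk η j - 1) with hm
        have hm1 : 1 ≤ m := cnt_one_le hge (le_refl _) hx
        have hcnt : cnt η 1 (Pk η j) = m + 1 := by
          rw [cnt_step hq.1, hq.2.1, ← hm]
          norm_num
        have hmj : m + 1 = j := by rw [← hq.2.2, hcnt]
        have hkth' : IsKth η m (Pk η j - 1) := ⟨hge, hx, rfl⟩
        have hiso := hIso m hm1 (by omega)
        rw [Pk_eq hkth', show Pk η j - 1 + 1 = Pk η j by ring, hq.2.1] at hiso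
        exact absurd hiso (by simp)

lemma comp_false (hS : origS η) (hEx : ∀ j : ℕ, 1 ≤ j → ∃ i, IsKth η j i)
    (hIso : ∀ j : ℕ, 1 ≤ j → j ≤ k → η (Pk η j + 1) = false) :
    ¬(η (Pk η (k+1) - 2) = true ∧ η (Pk η (k+1) - 3) = true) := by
  rintro ⟨h2, h3⟩
  have hp := Pk_spec (hEx (k+1) (by omega))
  by_cases hp4 : 4 ≤ Pk η (k+1)
  · have h31 : 1 ≤ Pk η (k+1) - 3 := by omega
    set m := cnt η 1 (Pk η (k+1) - 3) with hm
    have hm1 : 1 ≤ m := cnt_one_le h31 (le_refl _) h3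
    have hstep : cnt η 1 (Pk η (k+1) - 2) = m + 1 := by
      rw [cnt_step (by omega : (1:ℤ) ≤ Pk η (k+1) - 2),
        show Pk η (k+1) - 2 - 1 = Pk η (k+1) - 3 by ring, h2, ← hm]
      norm_num
    have hk3 : IsKth η m (Pk η (k+1) - 3) := ⟨h31, h3, rfl⟩
    have hk2 : IsKth η (m+1) (Pk η (k+1) - 2) := ⟨by omega, h2, hstep⟩
    have hmle : m + 1 ≤ k + 1 := by
      have hmono := cnt_mono (η := η) (a := 1) (show Pk η (k+1) - 2 ≤ Pk η (k+1) by omega)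
      rw [hstep, hp.2.2] at hmono
      exact hmono
    have hne : m + 1 ≠ k + 1 := by
      intro he
      rw [he] at hk2
      have := IsKth_unique hk2 hp
      omega
    have hiso := hIso m hm1 (by omega)
    rw [Pk_eq hk3, show Pk η (k+1) - 3 + 1 = Pk η (k+1) - 2 by ring, h2] at hiso
    exact absurd hiso (by simp)
  · have hneg : η (Pk η (k+1) - 3) = false :=
      negsite hS (by have := hp.1; omega) (by have := hp.1; omega)
    rw [h3] at hneg
    exact absurd hneg (by simp)

lemma gap_two (hEx : ∀ j : ℕ, 1 ≤ j → ∃ i, IsKth η j i)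
    (hIso : ∀ j : ℕ, 1 ≤ j → j ≤ k → η (Pk η j + 1) = false)
    (hk : 1 ≤ k) : Pk η k ≤ Pk η (k+1) - 2 := by
  have hqk := Pk_spec (hEx k hk)
  have hp := Pk_spec (hEx (k+1) (by omega))
  have hlt : Pk η k < Pk η (k+1) := IsKth_mono hqk hp (by omega)
  have hiso := hIso k hk (le_refl k)
  by_contra hcon
  push_neg at hcon
  have heq : Pk η k + 1 = Pk η (k+1) := by omega
  rw [heq, hp.2.1] at hiso
  exact absurd hiso (by simp)

lemma ord_lt (hEx : ∀ j : ℕ, 1 ≤ j → ∃ i, IsKth η j i) :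
    ∀ j : ℕ, 1 ≤ j → Pk η j < Pk η (j+1) := by
  intro j hj
  exact IsKth_mono (Pk_spec (hEx j hj)) (Pk_spec (hEx (j+1) (by omega))) (by omega)

/-- no pair at the `(k+1)`-st particle: everything stays. -/
lemma pw_nopair (hS : origS η) (hEx : ∀ j : ℕ, 1 ≤ j → ∃ i, IsKth η j i)
    (hIso : ∀ j : ℕ, 1 ≤ j → j ≤ k → η (Pk η j + 1) = false)
    (hnp : η (Pk η (k+1) + 1) = false) :
    k + 1 ≤ cnt (fstep η α) 1 (Pk η (k+1)) := by
  have hp := Pk_spec (hEx (k+1) (by omega))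
  apply cnt_ge_chain (f := fun j => if j ≤ k then Pk η j else Pk η (k+1))
  · intro j hj1 hjm
    by_cases hjk : j ≤ k
    · simp only [if_pos hjk]
      have hq := Pk_spec (hEx j hj1)
      exact ⟨hq.1, stay_lemma _ hq.2.1 (before_false hS hEx hIso j hj1 (by omega)) (hIso j hj1 hjk)⟩
    · simp only [if_neg hjk]
      exact ⟨hp.1, stay_lemma _ hp.2.1 (before_false hS hEx hIso (k+1) (by omega) (le_refl _)) hnp⟩
  · intro j hj1 hjm
    have hjk : j ≤ k := by omega
    simp only [if_pos hjk]
    by_cases hjk1 : j + 1 ≤ k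
    · simp only [if_pos hjk1]
      exact ord_lt hEx j hj1
    · simp only [if_neg hjk1]
      have hj : j = k := by omega
      subst hj
      exact ord_lt hEx j hj1
  · simp only [if_neg (show ¬ (k+1 ≤ k) by omega)]
    exact le_refl _

/-- pair at the `(k+1)`-st particle `p ≥ 2`: its left member lands on `p-1`. -/
lemma pw_pair (hS : origS η) (hEx : ∀ j : ℕ, 1 ≤ j → ∃ i, IsKth η j i)
    (hIso : ∀ j : ℕ, 1 ≤ j → j ≤ k → η (Pk η j + 1) = false)
    (hpair : η (Pk η (k+1) + 1) = true) (hp2 : 2 ≤ Pk η (k+1)) :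
    k + 1 ≤ cnt (fstep η α) 1 (Pk η (k+1) - 1) := by
  have hp := Pk_spec (hEx (k+1) (by omega))
  apply cnt_ge_chain (f := fun j => if j ≤ k then Pk η j else Pk η (k+1) - 1)
  · intro j hj1 hjm
    by_cases hjk : j ≤ k
    · simp only [if_pos hjk]
      have hq := Pk_spec (hEx j hj1)
      exact ⟨hq.1, stay_lemma _ hq.2.1 (before_false hS hEx hIso j hj1 (by omega)) (hIso j hj1 hjk)⟩
    · simp only [if_neg hjk]
      refine ⟨by omega, ?_⟩
      exact jump_left _ hp.2.1 hpair
        (before_false hS hEx hIso (k+1) (by omega) (le_refl _))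
        (comp_false hS hEx hIso)
  · intro j hj1 hjm
    have hjk : j ≤ k := by omega
    simp only [if_pos hjk]
    by_cases hjk1 : j + 1 ≤ k
    · simp only [if_pos hjk1]
      exact ord_lt hEx j hj1
    · simp only [if_neg hjk1]
      have hj : j = k := by omega
      subst hj
      have := gap_two hEx hIso hj1
      omega
  · simp only [if_neg (show ¬ (k+1 ≤ k) by omega)]
    exact le_refl _


/-- a pair at `p = 1` deterministically fills the origin. -/
lemma pw_viol (hS : origS η) (h1 : η 1 = true) (h2 : η 2 = true) :
    fstep η α 0 = true := by
  have := jump_left (α := α) 1 h1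
    (by rw [show (1:ℤ)+1 = 2 by norm_num]; exact h2)
    (by rw [show (1:ℤ)-1 = 0 by norm_num]; exact hS.2.2)
    (by
      rintro ⟨ha, _⟩
      rw [show (1:ℤ)-2 = -1 by norm_num, hS.2.1] at ha
      exact absurd ha (by simp))
  rw [show (1:ℤ)-1 = 0 by norm_num] at this
  exact this

end Struct


/-! ### Events and their measurability -/

/-- the event that `s` is an `S`-point (sites `s-2,s-1,s` empty). -/
def SAt (s : ℤ) : Set X := {η | η (s-2) = false ∧ η (s-1) = false ∧ η s = false}

lemma measSet_coordX (i : ℤ) (b : Bool) : MeasurableSet {η : X | η i = b} := by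
  have : {η : X | η i = b} = (fun η : X => η i) ⁻¹' {b} := by ext; simp
  rw [this]
  exact measurable_pi_apply i (measurableSet_singleton b)

lemma measSet_SAt (s : ℤ) : MeasurableSet (SAt s) := by
  have : SAt s = {η : X | η (s-2) = false} ∩ ({η | η (s-1) = false} ∩ {η | η s = false}) := by
    ext η; simp [SAt, and_assoc]
  rw [this]
  exact (measSet_coordX _ _).inter ((measSet_coordX _ _).inter (measSet_coordX _ _))

lemma mem_SAt0 {η : X} : η ∈ SAt 0 ↔ origS η := by
  unfold SAt origS
  norm_num

lemma meas_cnt (i : ℤ) : Measurable fun η : X => cnt η 1 i := by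
  apply Finset.measurable_sum
  intro j _
  have : (fun η : X => if η j = true then (1:ℕ) else 0)
      = (fun b : Bool => if b = true then (1:ℕ) else 0) ∘ (fun η : X => η j) := rfl
  rw [this]
  exact (Measurable.of_discrete).comp (measurable_pi_apply j)

lemma measSet_IsKth (k : ℕ) (i : ℤ) : MeasurableSet {η : X | IsKth η k i} := by
  by_cases h : 1 ≤ i
  · have : {η : X | IsKth η k i}
        = {η : X | η i = true} ∩ (fun η : X => cnt η 1 i) ⁻¹' {k} := by
      ext η; simp [IsKth, h, and_assoc]
    rw [this]
    exact (measSet_coordX _ _).inter ((meas_cnt i) (measurableSet_singleton k))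
  · have : {η : X | IsKth η k i} = ∅ := by
      ext η; simp [IsKth]; intro h'; omega
    rw [this]; exact MeasurableSet.empty

/-- the forward-invariant window events. -/
def Wset (k : ℕ) (v : ℤ) : Set X :=
  SAt 0 ∩ ⋃ (i : ℤ), ⋃ (_ : 1 ≤ i ∧ i ≤ v), {η | IsKth η (k+1) i}

lemma measSet_Wset (k : ℕ) (v : ℤ) : MeasurableSet (Wset k v) :=
  (measSet_SAt 0).inter (MeasurableSet.iUnion fun i =>
    MeasurableSet.iUnion fun _ => measSet_IsKth (k+1) i)

lemma shift_SAt (t s : ℤ) (η : X) : shiftBy t η ∈ SAt s ↔ η ∈ SAt (s + t) := by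
  simp [SAt, shiftBy, show s - 2 + t = s + t - 2 by ring, show s - 1 + t = s + t - 1 by ring]

/-! ### Global a.e. lemmas -/

section Main
variable {mu : Measure X}

lemma AE_Spres (hprob : IsProbabilityMeasure mu) (hstat : mu.bind QF = mu) :
    ∀ᵐ η ∂mu, ∀ᵐ α ∂coin, ∀ s : ℤ, (η ∈ SAt s ↔ fstep η α ∈ SAt s) := by
  have hper : ∀ s : ℤ, ∀ᵐ η ∂mu, ∀ᵐ α ∂coin, (η ∈ SAt s ↔ fstep η α ∈ SAt s) := by
    intro s
    have habs := absorb hprob hstat (measSet_SAt s).compl (by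
      apply Filter.Eventually.of_forall
      intro η
      apply Filter.Eventually.of_forall
      intro α hmem hstep
      exact hmem (Spres_pointwise s hstep.1 hstep.2.1 hstep.2.2))
    filter_upwards [habs] with η hη
    filter_upwards [hη] with α hα
    constructor
    · intro h; by_contra hc; exact (hα.mpr hc) h
    · intro h; by_contra hc; exact (hα.mp hc) h
  have h1 : ∀ᵐ η ∂mu, ∀ s : ℤ, ∀ᵐ α ∂coin, (η ∈ SAt s ↔ fstep η α ∈ SAt s) :=
    ae_all_iff.mpr hper
  filter_upwards [h1] with η hη using ae_all_iff.mpr hη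

lemma AE_unb (hprob : IsProbabilityMeasure mu) (hTI : mu.map shf = mu)
    (hF : mu frozenF = 0) :
    ∀ᵐ η ∂mu, ∀ m : ℤ, ∃ j, m < j ∧ η j = true := by
  set E : Set X := {η : X | η 0 = true ∧ ∀ j : ℤ, 0 < j → η j = false} with hE
  have hEmeas : MeasurableSet E := by
    have : E = {η : X | η 0 = true} ∩ ⋂ (j : ℤ), ⋂ (_ : 0 < j), {η : X | η j = false} := by
      ext η; simp [hE]
    rw [this]
    exact (measSet_coordX _ _).inter (MeasurableSet.iInter fun j =>
      MeasurableSet.iInter fun _ => measSet_coordX _ _)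
  have hpre : ∀ s : ℤ, shiftBy s ⁻¹' E = {η : X | η s = true ∧ ∀ j : ℤ, s < j → η j = false} := by
    intro s
    ext η
    simp only [Set.mem_preimage, hE, Set.mem_setOf_eq, shiftBy, zero_add]
    constructor
    · rintro ⟨h1, h2⟩
      refine ⟨h1, fun j hj => ?_⟩
      have := h2 (j - s) (by omega)
      rwa [sub_add_cancel] at this
    · rintro ⟨h1, h2⟩
      exact ⟨h1, fun j hj => h2 (j + s) (by omega)⟩
  have hE0 : mu E = 0 := by
    apply null_of_disjoint_shifts hprob hTI hEmeas
    intro s t hst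
    rw [hpre s, hpre t]
    ext η
    simp only [Set.mem_inter_iff, Set.mem_setOf_eq, Set.mem_empty_iff_false, iff_false]
    rintro ⟨⟨ha1, ha2⟩, ⟨hb1, hb2⟩⟩
    rcases lt_or_gt_of_ne hst with h | h
    · rw [ha2 t h] at hb1; exact absurd hb1 (by simp)
    · rw [hb2 s h] at ha1; exact absurd ha1 (by simp)
  have hsub : {η : X | ¬ ∀ m : ℤ, ∃ j, m < j ∧ η j = true}
      ⊆ frozenF ∪ ⋃ (i : ℤ), shiftBy i ⁻¹' E := by
    intro η hη
    simp only [Set.mem_setOf_eq, not_forall] at hη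
    obtain ⟨m, hm⟩ := hη
    push_neg at hm
    by_cases hpart : ∃ z : ℤ, η z = true
    · right
      have hbd : ∃ b : ℤ, ∀ z : ℤ, η z = true → z ≤ b := by
        refine ⟨m, fun z hz => ?_⟩
        by_contra hc
        exact absurd hz (by simpa using hm z (by omega))
      obtain ⟨i, hi, hmax⟩ := Int.exists_greatest_of_bdd hbd hpart
      refine Set.mem_iUnion.mpr ⟨i, ?_⟩
      rw [hpre i]
      refine ⟨hi, fun j hj => ?_⟩
      by_contra hc
      have : η j = true := by
        cases hx : η j with
        | true => rfl
        | false => exact absurd hx hc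
      have := hmax j this
      omega
    · left
      push_neg at hpart
      intro i
      left
      cases hx : η i with
      | true => exact absurd hx (hpart i)
      | false => rfl
  have hnull : mu {η : X | ¬ ∀ m : ℤ, ∃ j, m < j ∧ η j = true} = 0 := by
    apply measure_mono_null hsub
    apply measure_union_null hF
    exact measure_iUnion_null fun i => shift_null hTI i hEmeas hE0
  have := measure_eq_zero_iff_ae_notMem.mp hnull
  filter_upwards [this] with η hη
  simpa using hη

lemma AE_Sunb (hprob : IsProbabilityMeasure mu) (hTI : mu.map shf = mu) :
    ∀ᵐ η ∂mu, (∃ s : ℤ, η ∈ SAt s) → ∀ m : ℤ, ∃ s, s < m ∧ η ∈ SAt s := by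
  set LB : Set X := SAt 0 ∩ ⋂ (s : ℤ), ⋂ (_ : s < 0), (SAt s)ᶜ with hLB
  have hmeas : MeasurableSet LB :=
    (measSet_SAt 0).inter (MeasurableSet.iInter fun s =>
      MeasurableSet.iInter fun _ => (measSet_SAt s).compl)
  have hpre : ∀ t : ℤ, shiftBy t ⁻¹' LB
      = {η : X | η ∈ SAt t ∧ ∀ s : ℤ, s < t → η ∉ SAt s} := by
    intro t
    ext η
    simp only [hLB, Set.mem_preimage, Set.mem_inter_iff, Set.mem_iInter, Set.mem_compl_iff,
      Set.mem_setOf_eq, shift_SAt, zero_add]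
    constructor
    · rintro ⟨h1, h2⟩
      refine ⟨h1, fun s hs hmem => ?_⟩
      exact h2 (s - t) (by omega) (by rwa [sub_add_cancel])
    · rintro ⟨h1, h2⟩
      exact ⟨h1, fun s hs hmem => h2 (s + t) (by omega) hmem⟩
  have hnull : mu LB = 0 := by
    apply null_of_disjoint_shifts hprob hTI hmeas
    intro s t hst
    rw [hpre s, hpre t]
    ext η
    simp only [Set.mem_inter_iff, Set.mem_setOf_eq, Set.mem_empty_iff_false, iff_false]
    rintro ⟨⟨ha1, ha2⟩, ⟨hb1, hb2⟩⟩
    rcases lt_or_gt_of_ne hst with h | h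
    · exact hb2 s h ha1
    · exact ha2 t h hb1
  have hall : ∀ᵐ η ∂mu, ∀ t : ℤ, η ∉ shiftBy t ⁻¹' LB := by
    apply ae_all_iff.mpr
    intro t
    exact measure_eq_zero_iff_ae_notMem.mp (shift_null hTI t hmeas hnull)
  filter_upwards [hall] with η hη
  rintro ⟨s₀, hs₀⟩ m
  by_contra hc
  push_neg at hc
  have hbd : ∃ b : ℤ, ∀ s : ℤ, η ∈ SAt s → b ≤ s := by
    refine ⟨m, fun s hs => ?_⟩
    by_contra hcs
    exact hc s (by omega) hs
  obtain ⟨t₀, ht₀, hmin⟩ := Int.exists_least_of_bdd hbd ⟨s₀, hs₀⟩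
  apply hη t₀
  rw [hpre t₀]
  exact ⟨ht₀, fun s hs hmem => by have := hmin s hmem; omega⟩

end Main


section MainInduction
variable {mu : Measure X}

lemma iso_all (hprob : IsProbabilityMeasure mu) (hstat : mu.bind QF = mu)
    (hTI : mu.map shf = mu) (hF : mu frozenF = 0) :
    ∀ k : ℕ, ∀ᵐ η ∂mu, η ∈ SAt 0 →
      ∀ j : ℕ, 1 ≤ j → j ≤ k → η (Pk η j + 1) = false := by
  intro k
  induction k with
  | zero =>
      apply Filter.Eventually.of_forall
      intro η _ j hj1 hj0
      omega
  | succ k IH =>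
      -- forward invariance of the window events
      have hf : ∀ v : ℤ, ∀ᵐ η ∂mu, ∀ᵐ α ∂coin,
          η ∈ Wset k v → fstep η α ∈ Wset k v := by
        intro v
        filter_upwards [AE_Spres hprob hstat, AE_unb hprob hTI hF, IH] with η hSp hub hIH
        filter_upwards [hSp] with α hα
        rintro ⟨hS0, hex⟩
        simp only [Set.mem_iUnion] at hex
        obtain ⟨i, ⟨hi1, hiv⟩, hkth⟩ := hex
        have horig : origS η := mem_SAt0.mp hS0
        have hEx : ∀ j : ℕ, 1 ≤ j → ∃ i, IsKth η j i := exists_kth hub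
        have hIso := hIH hS0
        have hPk : Pk η (k+1) = i := Pk_eq hkth
        have hS0' : fstep η α ∈ SAt 0 := (hα 0).mp hS0
        refine ⟨hS0', ?_⟩
        simp only [Set.mem_iUnion]
        cases hp1 : η (Pk η (k+1) + 1) with
        | false =>
            have hcnt := pw_nopair (α := α) horig hEx hIso hp1
            obtain ⟨i', h1', h2', hk'⟩ := cross (by omega) hcnt
            exact ⟨i', ⟨h1', by omega⟩, hk'⟩
        | true =>
            by_cases hp2 : 2 ≤ Pk η (k+1)
            · have hcnt := pw_pair (α := α) horig hEx hIso hp1 hp2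
              obtain ⟨i', h1', h2', hk'⟩ := cross (by omega) hcnt
              exact ⟨i', ⟨h1', by omega⟩, hk'⟩
            · exfalso
              have hpe : Pk η (k+1) = 1 := by
                have := (Pk_spec (hEx (k+1) (by omega))).1
                omega
              have h1t : η 1 = true := by
                have := (Pk_spec (hEx (k+1) (by omega))).2.1
                rwa [hpe] at this
              have h2t : η 2 = true := by
                rw [hpe] at hp1
                rwa [show (1:ℤ)+1 = 2 by norm_num] at hp1
              have hviol := pw_viol (α := α) horig h1t h2t
              have h0f : fstep η α 0 = false := (mem_SAt0.mp hS0').2.2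
              rw [hviol] at h0f
              exact absurd h0f (by simp)
      -- a.e. preservation of window membership
      have hiff : ∀ᵐ η ∂mu, ∀ᵐ α ∂coin, ∀ v : ℤ,
          (η ∈ Wset k v ↔ fstep η α ∈ Wset k v) := by
        have h1 : ∀ᵐ η ∂mu, ∀ v : ℤ, ∀ᵐ α ∂coin,
            (η ∈ Wset k v ↔ fstep η α ∈ Wset k v) :=
          ae_all_iff.mpr fun v => absorb hprob hstat (measSet_Wset k v) (hf v)
        filter_upwards [h1] with η hη using ae_all_iff.mpr hη
      -- the (k+1)-st particle is a.e. not paired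
      have hB : ∀ᵐ η ∂mu,
          ¬(η ∈ SAt 0 ∧ ∃ i : ℤ, IsKth η (k+1) i ∧ η (i+1) = true) := by
        filter_upwards [AE_Spres hprob hstat, hiff, AE_unb hprob hTI hF, IH]
          with η hSp hIf hub hIH
        rintro ⟨hS0, i, hkth, hpair⟩
        have horig := mem_SAt0.mp hS0
        have hEx : ∀ j : ℕ, 1 ≤ j → ∃ i, IsKth η j i := exists_kth hub
        have hIso := hIH hS0
        have hPk : Pk η (k+1) = i := Pk_eq hkth
        have hcoin : ∀ᵐ α ∂coin, (∀ s : ℤ, (η ∈ SAt s ↔ fstep η α ∈ SAt s)) ∧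
            (∀ v : ℤ, (η ∈ Wset k v ↔ fstep η α ∈ Wset k v)) := hSp.and hIf
        have hne : (MeasureTheory.ae coin).NeBot := by
          refine ae_neBot.mpr ?_
          intro h0
          have := measure_univ (μ := coin)
          rw [h0] at this
          simp at this
        obtain ⟨α, hα, hV⟩ := hcoin.exists
        by_cases hp2 : 2 ≤ i
        · have hpairP : η (Pk η (k+1) + 1) = true := by rw [hPk]; exact hpair
          have hp2' : 2 ≤ Pk η (k+1) := by omega
          have hcnt := pw_pair (α := α) horig hEx hIso hpairP hp2'
          obtain ⟨i', h1', h2', hk'⟩ := cross (by omega) hcnt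
          have hW : fstep η α ∈ Wset k (i - 1) := by
            refine ⟨(hα 0).mp hS0, ?_⟩
            simp only [Set.mem_iUnion]
            exact ⟨i', ⟨h1', by omega⟩, hk'⟩
          have hWη : η ∈ Wset k (i-1) := (hV (i-1)).mpr hW
          obtain ⟨_, hex⟩ := hWη
          simp only [Set.mem_iUnion] at hex
          obtain ⟨i'', ⟨_, hle⟩, hk''⟩ := hex
          have := IsKth_unique hk'' hkth
          omega
        · have hpe : i = 1 := by have := hkth.1; omega
          have h1t : η 1 = true := by rw [← hpe]; exact hkth.2.1
          have h2t : η 2 = true := by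
            rw [hpe] at hpair
            rwa [show (1:ℤ)+1 = 2 by norm_num] at hpair
          have hviol := pw_viol (α := α) horig h1t h2t
          have h0f : fstep η α 0 = false := (mem_SAt0.mp ((hα 0).mp hS0)).2.2
          rw [hviol] at h0f
          exact absurd h0f (by simp)
      -- conclude
      filter_upwards [IH, AE_unb hprob hTI hF, hB] with η hIH hub hnB hS0 j hj1 hjk
      by_cases hjk' : j ≤ k
      · exact hIH hS0 j hj1 hjk'
      · have hje : j = k + 1 := by omega
        subst hje
        cases hx : η (Pk η (k+1) + 1) with
        | false => rfl
        | true =>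
            exact absurd ⟨hS0, Pk η (k+1), Pk_spec (exists_kth hub (k+1) (by omega)), hx⟩ hnB

/-- a.e. on `{0 ∈ S}` there is no pair to the right of the origin. -/
lemma M3 (hprob : IsProbabilityMeasure mu) (hstat : mu.bind QF = mu)
    (hTI : mu.map shf = mu) (hF : mu frozenF = 0) :
    ∀ᵐ η ∂mu, η ∈ SAt 0 → ∀ i : ℤ, 1 ≤ i → ¬(η i = true ∧ η (i+1) = true) := by
  have hall : ∀ᵐ η ∂mu, ∀ k : ℕ, η ∈ SAt 0 →
      ∀ j : ℕ, 1 ≤ j → j ≤ k → η (Pk η j + 1) = false :=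
    ae_all_iff.mpr (iso_all hprob hstat hTI hF)
  filter_upwards [hall] with η hiso hS0 i hi
  rintro ⟨hit, hit1⟩
  have hkth : IsKth η (cnt η 1 i) i := ⟨hi, hit, rfl⟩
  have hk1 : 1 ≤ cnt η 1 i := cnt_one_le hi (le_refl i) hit
  have := hiso (cnt η 1 i) hS0 (cnt η 1 i) hk1 (le_refl _)
  rw [Pk_eq hkth, hit1] at this
  exact absurd this (by simp)

/-- the exceptional set: an `S`-point at the origin with a pair to its right. -/
def NTset : Set X :=
  SAt 0 ∩ ⋃ (i : ℤ), ⋃ (_ : 1 ≤ i), ({η : X | η i = true} ∩ {η : X | η (i+1) = true})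

lemma measSet_NT : MeasurableSet NTset :=
  (measSet_SAt 0).inter (MeasurableSet.iUnion fun i => MeasurableSet.iUnion fun _ =>
    (measSet_coordX _ _).inter (measSet_coordX _ _))

lemma NT_null (hprob : IsProbabilityMeasure mu) (hstat : mu.bind QF = mu)
    (hTI : mu.map shf = mu) (hF : mu frozenF = 0) : mu NTset = 0 := by
  apply measure_eq_zero_iff_ae_notMem.mpr
  filter_upwards [M3 hprob hstat hTI hF] with η hM3
  rintro ⟨hS0, hex⟩
  simp only [Set.mem_iUnion, Set.mem_inter_iff, Set.mem_setOf_eq] at hex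
  obtain ⟨i, hi1, hit, hit1⟩ := hex
  exact hM3 hS0 i hi1 ⟨hit, hit1⟩

lemma shift_NT (s : ℤ) : shiftBy s ⁻¹' NTset
    = {η : X | η ∈ SAt s ∧ ∃ i : ℤ, s + 1 ≤ i ∧ η i = true ∧ η (i+1) = true} := by
  ext η
  simp only [NTset, Set.mem_preimage, Set.mem_inter_iff, Set.mem_iUnion, Set.mem_setOf_eq,
    shift_SAt, zero_add, shiftBy]
  constructor
  · rintro ⟨h1, i, hi1, hit, hit1⟩
    refine ⟨h1, i + s, by omega, hit, ?_⟩
    rwa [show i + s + 1 = i + 1 + s by ring]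
  · rintro ⟨h1, i, hi1, hit, hit1⟩
    refine ⟨h1, i - s, by omega, by rwa [sub_add_cancel], ?_⟩
    rwa [show i - s + 1 + s = i + 1 by ring]

end MainInduction

end Statement2Aux
/-- A regular TIS state with `μ(F) = 0` gives probability zero to
configurations containing three consecutive empty sites. -/
theorem no_three_consecutive_zeros
    (μ : Measure X) (hreg : RegF μ) (hμ : TISF μ) (hF : μ frozenF = 0) :
    μ {η : X | ∃ i : ℤ, η i = false ∧ η (i + 1) = false ∧ η (i + 2) = false} = 0 := by
  obtain ⟨⟨hprob, hTI⟩, hstat⟩ := hμ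
  set T : Set X := {η : X | ∃ i : ℤ, η i = false ∧ η (i + 1) = false ∧ η (i + 2) = false}
    with hT
  have hNTnull : ∀ s : ℤ, ∀ᵐ η ∂μ, η ∉ shiftBy s ⁻¹' NTset := fun s =>
    measure_eq_zero_iff_ae_notMem.mp (shift_null hTI s measSet_NT (NT_null hprob hstat hTI hF))
  have hNTall : ∀ᵐ η ∂μ, ∀ s : ℤ, η ∉ shiftBy s ⁻¹' NTset := ae_all_iff.mpr hNTnull
  have hfroz : ∀ᵐ η ∂μ, η ∈ T → η ∈ frozenF := by
    filter_upwards [AE_Sunb hprob hTI, hNTall] with η hSunb hNT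
    rintro ⟨i, h0, h1, h2⟩
    have hS : η ∈ SAt (i+2) := by
      refine ⟨?_, ?_, h2⟩
      · rwa [show i + 2 - 2 = i by ring]
      · rwa [show i + 2 - 1 = i + 1 by ring]
    intro j
    by_contra hcon
    push_neg at hcon
    have hjt : η j = true := by
      cases hx : η j with
      | true => rfl
      | false => exact absurd hx hcon.1
    have hjt1 : η (j+1) = true := by
      cases hx : η (j+1) with
      | true => rfl
      | false => exact absurd hx hcon.2
    obtain ⟨s, hslt, hsS⟩ := hSunb ⟨i+2, hS⟩ j
    apply hNT s
    rw [shift_NT s]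
    exact ⟨hsS, j, by omega, hjt, hjt1⟩
  have hdiffnull : μ (T \ frozenF) = 0 := by
    apply measure_eq_zero_iff_ae_notMem.mpr
    filter_upwards [hfroz] with η hη
    rintro ⟨hTm, hnF⟩
    exact hnF (hη hTm)
  have hle : μ T ≤ μ (T ∩ frozenF) + μ (T \ frozenF) := measure_le_inter_add_diff μ T frozenF
  have : μ T ≤ 0 := by
    calc μ T ≤ μ (T ∩ frozenF) + μ (T \ frozenF) := hle
      _ ≤ μ frozenF + 0 := add_le_add (measure_mono Set.inter_subset_right) hdiffnull.le
      _ = 0 := by rw [hF, add_zero]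
  exact le_antisymm this zero_le

end FSSEPPaper
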